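/- Let X be a D-forced space in which every crowded (dense-in-itself) subspace is somewhere dense. Then for every crowded S ⊆ X there is a partial D-mosaic M ⊆ S that is dense in the subspace S. -/
import Mathlib


open Cardinal Set

universe u

variable {X : Type u} [TopologicalSpace X]

/-- A `(𝒟,X)`-mosaic. -/
def IsMosaic (𝒟 : Set (Set X)) (M : Set X) : Prop :=
  ∃ (𝒱 : Set (Set X)) (f : Set X → Set X),
    (∀ V ∈ 𝒱, IsOpen V) ∧ 𝒱.PairwiseDisjoint id ∧ Dense (⋃₀ 𝒱) ∧
    (∀ V ∈ 𝒱, f V ∈ 𝒟) ∧ M = ⋃ V ∈ 𝒱, V ∩ f V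

/-- A partial `(𝒟,X)`-mosaic: the disjoint open family is not required to be maximal. -/
def IsPartialMosaic (𝒟 : Set (Set X)) (M : Set X) : Prop :=
  ∃ (𝒱 : Set (Set X)) (f : Set X → Set X),
    (∀ V ∈ 𝒱, IsOpen V ∧ V.Nonempty) ∧ 𝒱.PairwiseDisjoint id ∧
    (∀ V ∈ 𝒱, f V ∈ 𝒟) ∧ M = ⋃ V ∈ 𝒱, V ∩ f V

/-- `X` is `𝒟`-forced iff every dense subset of `X` includes a `𝒟`-mosaic. -/
def DForced (𝒟 : Set (Set X)) : Prop :=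
  ∀ S : Set X, Dense S → ∃ M ⊆ S, IsMosaic 𝒟 M

/-- Every somewhere dense set includes a nonempty piece `U ∩ D`. -/
lemma piece_of_somewhere_dense (𝒟 : Set (Set X)) (h𝒟 : ∀ D ∈ 𝒟, Dense D)
    (hf : DForced 𝒟) {T : Set X} (hT : ¬ IsNowhereDense T) :
    ∃ U : Set X, IsOpen U ∧ U.Nonempty ∧ ∃ D ∈ 𝒟, U ∩ D ⊆ T := by
  set W := interior (closure T) with hW
  have hWo : IsOpen W := isOpen_interior
  have hWne : W.Nonempty := nonempty_iff_ne_empty.mpr hT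
  have hAdense : Dense (T ∪ (closure T)ᶜ) := by
    rw [dense_iff_closure_eq, closure_union]
    apply eq_univ_of_univ_subset
    intro x _
    by_cases hx : x ∈ closure T
    · exact Or.inl hx
    · exact Or.inr (subset_closure hx)
  obtain ⟨M, hMA, 𝒱, f, hop, _, hdense, hfD, hMeq⟩ := hf _ hAdense
  obtain ⟨x, hxW, hxU⟩ := hdense.inter_open_nonempty W hWo hWne
  obtain ⟨V, hV𝒱, hxV⟩ := hxU
  refine ⟨V ∩ W, (hop V hV𝒱).inter hWo, ⟨x, hxV, hxW⟩, f V, hfD V hV𝒱, ?_⟩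
  intro y ⟨⟨hyV, hyW⟩, hyD⟩
  have hyM : y ∈ M := by
    rw [hMeq]; exact mem_biUnion hV𝒱 ⟨hyV, hyD⟩
  have hyA := hMA hyM
  rcases hyA with h | h
  · exact h
  · exact absurd (interior_subset hyW) h

theorem stmt_11 (𝒟 : Set (Set X)) (h𝒟 : ∀ D ∈ 𝒟, Dense D) (hf : DForced 𝒟)
    (hcr : ∀ S : Set X, S.Nonempty → (∀ x ∈ S, x ∈ closure (S \ {x})) →
      ¬ IsNowhereDense S) :
    ∀ S : Set X, (∀ x ∈ S, x ∈ closure (S \ {x})) →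
      ∃ M ⊆ S, IsPartialMosaic 𝒟 M ∧ S ⊆ closure M := by
  intro S hS
  classical
  set Pfam : Set (Set (Set X)) :=
    {𝒱 | (∀ V ∈ 𝒱, IsOpen V ∧ V.Nonempty) ∧ 𝒱.PairwiseDisjoint id ∧
      ∀ V ∈ 𝒱, ∃ D ∈ 𝒟, V ∩ D ⊆ S} with hPfam
  obtain ⟨𝒱, h𝒱max⟩ : ∃ 𝒱, Maximal (· ∈ Pfam) 𝒱 := by
    apply zorn_subset
    intro c hc hchain
    refine ⟨⋃₀ c, ⟨?_, ?_, ?_⟩, fun s hs => subset_sUnion_of_mem hs⟩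
    · rintro V ⟨a, hac, hVa⟩
      exact (hc hac).1 V hVa
    · rintro V ⟨a, hac, hVa⟩ W ⟨b, hbc, hWb⟩ hVW
      rcases hchain.total hac hbc with h | h
      · exact (hc hbc).2.1 (h hVa) hWb hVW
      · exact (hc hac).2.1 hVa (h hWb) hVW
    · rintro V ⟨a, hac, hVa⟩
      exact (hc hac).2.2 V hVa
  obtain ⟨h𝒱op, h𝒱dis, h𝒱D⟩ := h𝒱max.prop
  set f : Set X → Set X :=
    fun V => if h : ∃ D ∈ 𝒟, V ∩ D ⊆ S then h.choose else ∅ with hfdef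
  have hfspec : ∀ V ∈ 𝒱, f V ∈ 𝒟 ∧ V ∩ f V ⊆ S := by
    intro V hV
    have h := h𝒱D V hV
    simp only [hfdef, dif_pos h]
    exact ⟨h.choose_spec.1, h.choose_spec.2⟩
  set M : Set X := ⋃ V ∈ 𝒱, V ∩ f V with hM
  have hMS : M ⊆ S := by
    intro y hy
    obtain ⟨V, hV, hyV⟩ := mem_iUnion₂.mp hy
    exact (hfspec V hV).2 hyV
  have hVsub : ∀ V ∈ 𝒱, V ⊆ closure M := by
    intro V hV
    have hd : Dense (f V) := h𝒟 _ (hfspec V hV).1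
    refine (hd.open_subset_closure_inter (h𝒱op V hV).1).trans ?_
    exact closure_mono (subset_biUnion_of_mem (u := fun V => V ∩ f V) hV)
  refine ⟨M, hMS, ⟨𝒱, f, h𝒱op, h𝒱dis, fun V hV => (hfspec V hV).1, rfl⟩, ?_⟩
  by_contra hnot
  obtain ⟨x, hxS, hxM⟩ := not_subset.mp hnot
  set O : Set X := (closure M)ᶜ with hO
  have hOo : IsOpen O := isClosed_closure.isOpen_compl
  -- S ∩ O is nonempty and crowded
  have hS'ne : (S ∩ O).Nonempty := ⟨x, hxS, hxM⟩
  have hS'cr : ∀ y ∈ S ∩ O, y ∈ closure ((S ∩ O) \ {y}) := by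
    rintro y ⟨hyS, hyO⟩
    have h1 := hS y hyS
    rw [mem_closure_iff] at h1 ⊢
    intro U hU hyU
    obtain ⟨z, hz, hzS, hzy⟩ := h1 (U ∩ O) (hU.inter hOo) ⟨hyU, hyO⟩
    exact ⟨z, hz.1, ⟨⟨hzS, hz.2⟩, hzy⟩⟩
  obtain ⟨U, hUo, hUne, D, hD𝒟, hUD⟩ :=
    piece_of_somewhere_dense 𝒟 h𝒟 hf (hcr _ hS'ne hS'cr)
  have hUOne : (U ∩ O).Nonempty := by
    obtain ⟨z, hzU, hzD⟩ := (h𝒟 D hD𝒟).inter_open_nonempty U hUo hUne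
    exact ⟨z, hzU, (hUD ⟨hzU, hzD⟩).2⟩
  have hnew : U ∩ O ∉ 𝒱 := by
    intro hmem
    obtain ⟨z, hzU, hzO⟩ := hUOne
    exact hzO (hVsub _ hmem ⟨hzU, hzO⟩)
  have hins : insert (U ∩ O) 𝒱 ∈ Pfam := by
    refine ⟨?_, ?_, ?_⟩
    · rintro V (rfl | hV)
      · exact ⟨hUo.inter hOo, hUOne⟩
      · exact h𝒱op V hV
    · refine h𝒱dis.insert ?_
      intro V hV _
      refine Set.disjoint_left.mpr ?_
      rintro z ⟨_, hzO⟩ hzV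
      exact hzO (hVsub V hV hzV)
    · rintro V (rfl | hV)
      · exact ⟨D, hD𝒟, fun z hz => (hUD ⟨hz.1.1, hz.2⟩).1⟩
      · exact h𝒱D V hV
  have := h𝒱max.2 hins (subset_insert _ _)
  exact hnew (this (mem_insert _ _))
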